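/- Let T be a tree on n vertices with maximum degree at most 3. Then Z(T) ≤ n_3 + 2, where n_3 is the number of vertices of T of degree 3. -/

import Mathlib

open Matrix Finset

variable {V : Type*}

/-- `A` is a real symmetric matrix whose off-diagonal nonzero pattern is given by `G`. -/
def IsGraphMatrix [Fintype V] (G : SimpleGraph V) (A : Matrix V V ℝ) : Prop :=
  A.IsSymm ∧ ∀ i j : V, i ≠ j → (A i j ≠ 0 ↔ G.Adj i j)

/-- The nullity of a square real matrix. -/
noncomputable def nullity [Fintype V] (A : Matrix V V ℝ) : ℕ :=
  Fintype.card V - A.rank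

/-- The minimum rank of a graph. -/
noncomputable def minRank [Fintype V] (G : SimpleGraph V) : ℕ :=
  sInf {r : ℕ | ∃ A : Matrix V V ℝ, IsGraphMatrix G A ∧ A.rank = r}

/-- The maximum nullity of a graph. -/
noncomputable def maxNullity [Fintype V] (G : SimpleGraph V) : ℕ :=
  sSup {k : ℕ | ∃ A : Matrix V V ℝ, IsGraphMatrix G A ∧ nullity A = k}

/-- The set of vertices eventually colored black by the color-change rule,
starting from the initially black set `Z`. A black vertex `u` with exactly one
white neighbor `v` forces `v` black. -/
inductive ZForced (G : SimpleGraph V) (Z : Set V) : V → Prop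
  | init : ∀ {v}, v ∈ Z → ZForced G Z v
  | force : ∀ {u v}, G.Adj u v → ZForced G Z u →
      (∀ w, G.Adj u w → w ≠ v → ZForced G Z w) → ZForced G Z v

/-- `Z` is a zero forcing set for `G`. -/
def IsZeroForcingSet (G : SimpleGraph V) (Z : Set V) : Prop :=
  ∀ v : V, ZForced G Z v

/-- The zero forcing number of `G`. -/
noncomputable def zeroForcingNumber [Fintype V] (G : SimpleGraph V) : ℕ :=
  sInf {k : ℕ | ∃ Z : Finset V, Z.card = k ∧ IsZeroForcingSet G ↑Z}

set_option linter.unusedSectionVars false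


open Finset

section ZFAux

variable {V : Type*} [DecidableEq V] {T : SimpleGraph V}

lemma exists_shortest_path (hc : T.Connected) (r v : V) :
    ∃ p : T.Walk r v, p.IsPath ∧ p.length = T.dist r v := by
  obtain ⟨p, hp⟩ := hc.exists_walk_length_eq_dist r v
  exact ⟨p.bypass, p.bypass_isPath,
    le_antisymm (hp ▸ p.length_bypass_le) (SimpleGraph.dist_le _)⟩

lemma concat_path {r u v : V} {p : T.Walk r u} (hp : p.IsPath) (h : T.Adj u v)
    (hv : v ∉ p.support) : (p.concat h).IsPath := by
  rw [SimpleGraph.Walk.isPath_def, SimpleGraph.Walk.support_concat,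
    List.nodup_append]
  refine ⟨(SimpleGraph.Walk.isPath_def _).mp hp, List.nodup_singleton v, ?_⟩
  simpa using fun (a : V) (ha : a ∈ p.support) (hav : a = v) => hv (hav ▸ ha)

lemma adj_dist_ne (hT : T.IsTree) (r : V) {u v : V} (h : T.Adj u v) :
    T.dist r u ≠ T.dist r v := by
  intro he
  obtain ⟨p, hp, hlen⟩ := exists_shortest_path hT.isConnected r u
  have hvs : v ∉ p.support := by
    intro hv
    have h1 := SimpleGraph.dist_le (p.takeUntil v hv)
    have h2 := SimpleGraph.dist_le (p.dropUntil v hv)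
    have h3 : (p.takeUntil v hv).length + (p.dropUntil v hv).length = p.length := by
      rw [← SimpleGraph.Walk.length_append, p.take_spec hv]
    have h4 := hT.isConnected.pos_dist_of_ne h.ne'
    omega
  obtain ⟨p', hp', hlen'⟩ := exists_shortest_path hT.isConnected r v
  have heq := (hT.existsUnique_path r v).unique (concat_path hp h hvs) hp'
  have hlc : (p.concat h).length = p'.length := by rw [heq]
  rw [SimpleGraph.Walk.length_concat] at hlc
  omega

lemma up_eq (hT : T.IsTree) (r : V) {u u' v : V} (h : T.Adj u v) (h' : T.Adj u' v)
    (hd : T.dist r u < T.dist r v) (hd' : T.dist r u' < T.dist r v) : u = u' := by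
  obtain ⟨p, hp, hlen⟩ := exists_shortest_path hT.isConnected r u
  obtain ⟨p', hp', hlen'⟩ := exists_shortest_path hT.isConnected r u'
  have hvs : v ∉ p.support := by
    intro hv
    have h1 := SimpleGraph.dist_le (p.takeUntil v hv)
    have h2 := p.length_takeUntil_le hv
    omega
  have hvs' : v ∉ p'.support := by
    intro hv
    have h1 := SimpleGraph.dist_le (p'.takeUntil v hv)
    have h2 := p'.length_takeUntil_le hv
    omega
  have heq := (hT.existsUnique_path r v).unique (concat_path hp h hvs)
    (concat_path hp' h' hvs')
  obtain ⟨hv, -⟩ := SimpleGraph.Walk.concat_inj heq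
  exact hv

lemma adj_dist_cases (hT : T.IsTree) (r : V) {u v : V} (h : T.Adj u v) :
    T.dist r u + 1 = T.dist r v ∨ T.dist r v + 1 = T.dist r u := by
  have hne := adj_dist_ne hT r h
  have h1 : T.dist r v ≤ T.dist r u + T.dist u v := hT.isConnected.dist_triangle
  have h2 : T.dist r u ≤ T.dist r v + T.dist v u := hT.isConnected.dist_triangle
  have h3 : T.dist u v ≤ 1 := by
    simpa using SimpleGraph.dist_le (SimpleGraph.Walk.cons h SimpleGraph.Walk.nil)
  have h4 : T.dist v u ≤ 1 := by
    simpa using SimpleGraph.dist_le (SimpleGraph.Walk.cons h.symm SimpleGraph.Walk.nil)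
  omega

lemma exists_parent (hc : T.Connected) {r v : V} (hne : v ≠ r) :
    ∃ u, T.Adj u v ∧ T.dist r u + 1 = T.dist r v := by
  obtain ⟨p, hp, hlen⟩ := exists_shortest_path hc r v
  obtain ⟨w, hadj, q, hq⟩ := SimpleGraph.Walk.exists_eq_cons_of_ne hne p.reverse
  refine ⟨w, hadj.symm, ?_⟩
  have hlq : q.length + 1 = T.dist r v := by
    have := congrArg SimpleGraph.Walk.length hq
    simp only [SimpleGraph.Walk.length_reverse, SimpleGraph.Walk.length_cons] at this
    omega
  have h1 : T.dist r w ≤ q.length := by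
    simpa using SimpleGraph.dist_le q.reverse
  have h2 : T.dist r v ≤ T.dist r w + T.dist w v := hc.dist_triangle
  have h3 : T.dist w v ≤ 1 := by
    simpa using SimpleGraph.dist_le (SimpleGraph.Walk.cons hadj.symm SimpleGraph.Walk.nil)
  omega

end ZFAux

/-- For a tree `T` with maximum degree at most 3,
`Z(T) ≤ n₃ + 2`, where `n₃` is the number of degree-3 vertices. -/
theorem zeroForcingNumber_tree_le {V : Type*} [Fintype V] [DecidableEq V]
    (T : SimpleGraph V) [DecidableRel T.Adj] (htree : T.IsTree)
    (hdeg : ∀ v : V, T.degree v ≤ 3) :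
    zeroForcingNumber T ≤
      (Finset.univ.filter (fun v => T.degree v = 3)).card + 2 := by
  classical
  have hconn := htree.isConnected
  obtain ⟨r⟩ : Nonempty V := hconn.nonempty
  have hdr : T.dist r r = 0 := SimpleGraph.dist_self
  have hdpos : ∀ v, v ≠ r → 0 < T.dist r v := fun v hv => hconn.pos_dist_of_ne (Ne.symm hv)
  -- parent function
  have hpaE : ∀ v : V, ∃ u : V, v ≠ r → (T.Adj u v ∧ T.dist r u + 1 = T.dist r v) := by
    intro v
    by_cases hv : v = r
    · exact ⟨r, fun h => absurd hv h⟩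
    · obtain ⟨u, h1, h2⟩ := exists_parent hconn hv
      exact ⟨u, fun _ => ⟨h1, h2⟩⟩
  choose pa hpa using hpaE
  -- chosen child
  have hchE : ∀ u : V, ∃ c : V,
      (∃ w, T.Adj u w ∧ T.dist r u + 1 = T.dist r w) → (T.Adj u c ∧ T.dist r u + 1 = T.dist r c) := by
    intro u
    by_cases h : ∃ w, T.Adj u w ∧ T.dist r u + 1 = T.dist r w
    · obtain ⟨w, hw⟩ := h; exact ⟨w, fun _ => hw⟩
    · exact ⟨r, fun hw => absurd hw h⟩
  choose ch hch using hchE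
  set B : Finset V := univ.filter (fun w => w ≠ r ∧ w ≠ ch (pa w)) with hB
  set Z : Finset V := insert r B with hZ
  -- Z is a zero forcing set
  have hforce : ∀ n (v : V), T.dist r v ≤ n → ZForced T (↑Z) v := by
    intro n
    induction n with
    | zero =>
      intro v hv
      have hvr : v = r := by
        by_contra hne
        exact absurd hv (by have := hdpos v hne; omega)
      exact ZForced.init (by simp [hZ, hvr])
    | succ n ih =>
      intro v hv
      rcases Nat.lt_or_ge (T.dist r v) (n + 1) with h | h
      · exact ih v (by omega)
      have hdv : T.dist r v = n + 1 := by omega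
      have hvr : v ≠ r := by
        intro hvr; rw [hvr] at hdv; omega
      by_cases hvZ : v ∈ Z
      · exact ZForced.init (by exact_mod_cast hvZ)
      obtain ⟨hadj, hdu⟩ := hpa v hvr
      refine ZForced.force hadj (ih (pa v) (by omega)) ?_
      intro w haw hwv
      rcases adj_dist_cases htree r haw with hc | hc
      · -- w is a child of pa v
        have hwr : w ≠ r := by
          intro hh; rw [hh] at hc
          have : T.dist r r = 0 := hdr
          omega
        have hpaw : pa w = pa v := by
          obtain ⟨ha', hd'⟩ := hpa w hwr
          exact up_eq htree r ha' haw (by omega) (by omega)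
        have hvch : v = ch (pa v) := by
          by_contra hne
          exact hvZ (by simp [hZ, hB, hvr, hne])
        have hwch : w ≠ ch (pa w) := by
          rw [hpaw]
          intro hh
          exact hwv (hh.trans hvch.symm)
        refine ZForced.init ?_
        have : w ∈ Z := by simp [hZ, hB, hwr, hwch]
        exact_mod_cast this
      · -- w is above pa v
        exact ih w (by omega)
  have hIsZF : IsZeroForcingSet T (↑Z) := fun v => hforce (T.dist r v) v le_rfl
  -- counting
  have hcard1 : Z.card ≤ B.card + 1 := Finset.card_insert_le _ _
  have hcount : B.card = ∑ u : V, (B.filter (fun w => pa w = u)).card :=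
    Finset.card_eq_sum_card_fiberwise (fun w _ => Finset.mem_univ (pa w))
  have hfib : ∀ u : V, (B.filter (fun w => pa w = u)).card ≤
      (if T.degree u = 3 then 1 else 0) + (if u = r then 1 else 0) := by
    intro u
    set C : Finset V := univ.filter (fun w => T.Adj u w ∧ T.dist r u + 1 = T.dist r w) with hC
    have hsub : B.filter (fun w => pa w = u) ⊆ C \ {ch u} := by
      intro w hw
      simp only [hB, Finset.mem_filter, Finset.mem_univ, true_and] at hw
      obtain ⟨⟨hwr, hwch⟩, hpw⟩ := hw
      obtain ⟨ha, hdw⟩ := hpa w hwr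
      rw [hpw] at ha hdw hwch
      simp only [hC, Finset.mem_sdiff, Finset.mem_filter, Finset.mem_univ, true_and,
        Finset.mem_singleton]
      exact ⟨⟨ha, hdw⟩, hwch⟩
    have hCn : C ⊆ T.neighborFinset u := by
      intro w hw
      simp only [hC, Finset.mem_filter, Finset.mem_univ, true_and] at hw
      exact (SimpleGraph.mem_neighborFinset _ _ _).mpr hw.1
    have hle := Finset.card_le_card hsub
    rcases Finset.eq_empty_or_nonempty C with hCe | hCe
    · rw [hCe] at hle
      simp only [Finset.empty_sdiff, Finset.card_empty, Nat.le_zero] at hle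
      rw [hle]
      exact Nat.zero_le _
    · have hchC : ch u ∈ C := by
        obtain ⟨w, hwC⟩ := hCe
        simp only [hC, Finset.mem_filter, Finset.mem_univ, true_and] at hwC
        have := hch u ⟨w, hwC⟩
        simp only [hC, Finset.mem_filter, Finset.mem_univ, true_and]
        exact this
      have hcardC : (C \ {ch u}).card = C.card - 1 := by
        rw [Finset.card_sdiff_of_subset (Finset.singleton_subset_iff.mpr hchC), Finset.card_singleton]
      have hCdeg : C.card ≤ T.degree u := by
        rw [← SimpleGraph.card_neighborFinset_eq_degree]
        exact Finset.card_le_card hCn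
      have h3 := hdeg u
      by_cases hur : u = r
      · rw [if_pos hur]
        by_cases hd3 : T.degree u = 3
        · rw [if_pos hd3]; omega
        · rw [if_neg hd3]; omega
      · have hCdeg' : C.card < T.degree u := by
          rw [← SimpleGraph.card_neighborFinset_eq_degree]
          apply Finset.card_lt_card
          rw [Finset.ssubset_iff_of_subset hCn]
          obtain ⟨ha, hdu⟩ := hpa u hur
          refine ⟨pa u, (SimpleGraph.mem_neighborFinset _ _ _).mpr ha.symm, ?_⟩
          simp only [hC, Finset.mem_filter, Finset.mem_univ, true_and, not_and]
          intro _
          omega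
        rw [if_neg hur]
        by_cases hd3 : T.degree u = 3
        · rw [if_pos hd3]; omega
        · rw [if_neg hd3]; omega
  have hsum : ∑ u : V, ((if T.degree u = 3 then 1 else 0) + (if u = r then 1 else 0))
      = (Finset.univ.filter (fun v => T.degree v = 3)).card + 1 := by
    rw [Finset.sum_add_distrib]
    congr 1
    · exact (Finset.card_filter _ _).symm
    · simp
  have hBle : B.card ≤ (Finset.univ.filter (fun v => T.degree v = 3)).card + 1 := by
    rw [hcount]
    calc ∑ u : V, (B.filter (fun w => pa w = u)).card
        ≤ ∑ u : V, ((if T.degree u = 3 then 1 else 0) + (if u = r then 1 else 0)) :=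
          Finset.sum_le_sum (fun u _ => hfib u)
      _ = _ := hsum
  have hmem : Z.card ∈ {k : ℕ | ∃ Z' : Finset V, Z'.card = k ∧ IsZeroForcingSet T ↑Z'} :=
    ⟨Z, rfl, hIsZF⟩
  have hle := Nat.sInf_le hmem
  unfold zeroForcingNumber
  omega
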